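/- If a spacetime (M,g) is causally pseudoconvex and disprisoning, then for every p ∈ M the restriction of exp_p to the causal domain C_p ⊂ T_pM is a proper map; in particular exp_p has the causal continuation property. Consequently, every globally hyperbolic spacetime satisfies the causal continuation property at every point. -/

import Mathlib

open Set Filter Topology
open scoped Manifold

section Lorentz

variable {W : Type*} [NormedAddCommGroup W] [NormedSpace ℝ W]
  {Hm : Type*} [TopologicalSpace Hm] (I : ModelWithCorners ℝ W Hm)
  {M : Type*} [TopologicalSpace M] [ChartedSpace Hm M] [IsManifold I (⊤ : ℕ∞) M]

/-- A piecewise smooth curve `γ` on `[a,b]` all of whose velocities satisfy the pointwise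
condition `P` (e.g. being future-directed causal). -/
def PiecewiseSmoothCurveWith (P : M → W → Prop) (γ : ℝ → M) (a b : ℝ) : Prop :=
  a < b ∧ ContinuousOn γ (Icc a b) ∧
    ∃ (n : ℕ) (t : Fin (n + 1) → ℝ), StrictMono t ∧ t 0 = a ∧ t (Fin.last n) = b ∧
      ∀ i : Fin n, ContMDiffOn 𝓘(ℝ, ℝ) I (⊤ : ℕ∞) γ (Icc (t i.castSucc) (t i.succ)) ∧
        ∀ s ∈ Icc (t i.castSucc) (t i.succ),
          P (γ s) (mfderivWithin 𝓘(ℝ, ℝ) I γ (Icc (t i.castSucc) (t i.succ)) s (1 : ℝ))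

end Lorentz

/-- Let `(M,g)` be a spacetime whose geodesics are encoded by the
exponential maps `Exp x : Dom x ⊂ T_xM → M` (maximal star-shaped domains).  If `(M,g)` is
causally pseudoconvex and disprisoning, then for every `p ∈ M` the restriction of `exp_p`
to the causal domain `C_p = closure (timelike vectors at p) ∩ Dom p` is a proper map; in
particular `exp_p` has the causal continuation property at every point.  (Globally
hyperbolic spacetimes are causally pseudoconvex and disprisoning, so they satisfy the
causal continuation property at every point.) -/
theorem pseudoconvex_disprisoning_implies_proper_and_CCP
    {W : Type*} [NormedAddCommGroup W] [NormedSpace ℝ W] [FiniteDimensional ℝ W]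
    {Hm : Type*} [TopologicalSpace Hm] (I : ModelWithCorners ℝ W Hm)
    {M : Type*} [TopologicalSpace M] [ChartedSpace Hm M] [IsManifold I (⊤ : ℕ∞) M]
    [T2Space M] [ConnectedSpace M]
    (g : M → W →ₗ[ℝ] W →ₗ[ℝ] ℝ) (hsymm : ∀ x v w, g x v w = g x w v)
    (T : M → W) (hT : ∀ x, g x (T x) (T x) < 0)
    -- the exponential maps of `(M,g)`, at every point, on maximal star-shaped domains
    (Dom : M → Set W) (Exp : M → W → M)
    (hDom : ∀ x, IsOpen (Dom x)) (h0Dom : ∀ x, (0 : W) ∈ Dom x)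
    (hstar : ∀ x, ∀ w ∈ Dom x, ∀ t ∈ Icc (0 : ℝ) 1, t • w ∈ Dom x)
    (hExpCont : ∀ x, ContinuousOn (Exp x) (Dom x)) (hExp0 : ∀ x, Exp x 0 = x)
    -- causal pseudoconvexity
    (hpseudo : ∀ K : Set M, IsCompact K → ∃ Kstar : Set M, IsCompact Kstar ∧
      ∀ x : M, ∀ w : W, g x w w ≤ 0 → w ≠ 0 → w ∈ Dom x →
        x ∈ K → Exp x w ∈ K → ∀ t ∈ Icc (0 : ℝ) 1, Exp x (t • w) ∈ Kstar)
    -- the disprisoning condition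
    (hdispr : ∀ x : M, ∀ w : W, g x w w ≤ 0 → w ≠ 0 →
      (¬ ∃ C : Set M, IsCompact C ∧
        ∀ t : ℝ, 0 ≤ t → t • w ∈ Dom x → Exp x (t • w) ∈ C) ∧
      (¬ ∃ C : Set M, IsCompact C ∧
        ∀ t : ℝ, t ≤ 0 → t • w ∈ Dom x → Exp x (t • w) ∈ C)) :
    ∀ p : M,
      -- `exp_p` restricted to the causal cone `C_p` is a proper map
      (∀ K : Set M, IsCompact K →
        IsCompact {v : W | v ∈ closure {w : W | g p w w < 0} ∩ Dom p ∧ Exp p v ∈ K}) ∧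
      -- the causal continuation property at `p`
      (∀ γ : ℝ → M,
        PiecewiseSmoothCurveWith I (fun x w => g x w w ≤ 0 ∧ g x w (T x) < 0) γ 0 1 →
        γ 0 = p →
        ∀ b : ℝ, 0 < b → b ≤ 1 →
          ∀ σ : ℝ → W, ContinuousOn σ (Ico 0 b) → σ 0 = 0 →
            (∀ t ∈ Ico (0 : ℝ) b,
              σ t ∈ closure {w : W | g p w w < 0} ∩ Dom p ∧ Exp p (σ t) = γ t) →
            ∃ (u : ℕ → ℝ) (v : W), (∀ k, u k ∈ Ico (0 : ℝ) b) ∧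
              Tendsto u atTop (𝓝 b) ∧ v ∈ Dom p ∧
              Tendsto (fun k => σ (u k)) atTop (𝓝 v)) := by
  
  intro p
  -- continuity of the quadratic form
  have gcont : Continuous fun w : W => g p w w := by
    let G : W →ₗ[ℝ] W →L[ℝ] ℝ :=
      { toFun := fun w => LinearMap.toContinuousLinearMap (g p w)
        map_add' := by intro a b; ext y; simp
        map_smul' := by intro c a; ext y; simp }
    have hG : Continuous G := G.continuous_of_finiteDimensional
    have h2 : Continuous fun w : W => (G w) w := hG.clm_apply continuous_id
    simpa [G] using h2
  set Cne : Set W := {w : W | g p w w < 0} with hCne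
  have hCle : closure Cne ⊆ {w : W | g p w w ≤ 0} := by
    apply closure_minimal _ (isClosed_le gcont continuous_const)
    intro w hw
    have hw' : g p w w < 0 := hw
    exact hw'.le
  have hCsmul : ∀ c : ℝ, 0 < c → ∀ v ∈ closure Cne, c • v ∈ closure Cne := by
    intro c hc v hv
    have hmap : (fun u : W => c • u) '' Cne ⊆ Cne := by
      rintro _ ⟨u, hu, rfl⟩
      show g p (c • u) (c • u) < 0
      have heq : g p (c • u) (c • u) = c * (c * g p u u) := by
        simp only [map_smul, LinearMap.smul_apply, smul_eq_mul]
      rw [heq]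
      exact mul_neg_of_pos_of_neg hc (mul_neg_of_pos_of_neg hc hu)
    have h1 : c • v ∈ closure ((fun u : W => c • u) '' Cne) :=
      image_closure_subset_closure_image (continuous_const_smul c) ⟨v, hv, rfl⟩
    exact closure_mono hmap h1
  -- main: properness
  have main : ∀ K : Set M, IsCompact K →
      IsCompact {v : W | v ∈ closure Cne ∩ Dom p ∧ Exp p v ∈ K} := by
    intro K hK
    set S := {v : W | v ∈ closure Cne ∩ Dom p ∧ Exp p v ∈ K} with hS
    obtain ⟨K0, hK0, hK0spec⟩ := hpseudo (insert p K) (hK.insert p)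
    set Ks : Set M := insert p K0 with hKs
    have hKsc : IsCompact Ks := hK0.insert p
    have hKscl : IsClosed Ks := hKsc.isClosed
    have hpKs : p ∈ Ks := mem_insert _ _
    -- every radial segment over a point of S lies in the compact Ks
    have seg : ∀ v ∈ S, ∀ t ∈ Icc (0:ℝ) 1, Exp p (t • v) ∈ Ks := by
      intro v hv t ht
      rcases eq_or_ne v 0 with rfl | hv0
      · simpa [hExp0 p] using hpKs
      · exact mem_insert_of_mem _ (hK0spec p v (hCle hv.1.1) hv0 hv.1.2
          (mem_insert _ _) (mem_insert_of_mem _ hv.2) t ht)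
    -- boundedness
    have hbdd : Bornology.IsBounded S := by
      by_contra hnb
      have hseq : ∀ n : ℕ, ∃ v ∈ S, (n : ℝ) < ‖v‖ := by
        intro n
        by_contra hcon
        push_neg at hcon
        exact hnb (isBounded_iff_forall_norm_le.mpr ⟨n, hcon⟩)
      choose v hvS hvn using hseq
      have hvne : ∀ n, v n ≠ 0 := by
        intro n hn
        have h := hvn n
        rw [hn, norm_zero] at h
        exact absurd h (not_lt.mpr (Nat.cast_nonneg n))
      have hvpos : ∀ n, (0:ℝ) < ‖v n‖ := fun n => norm_pos_iff.mpr (hvne n)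
      set w : ℕ → W := fun n => ‖v n‖⁻¹ • v n with hw
      have hwsph : ∀ n, w n ∈ Metric.sphere (0:W) 1 := by
        intro n
        simp [hw, mem_sphere_zero_iff_norm, norm_smul, abs_of_pos (inv_pos.mpr (hvpos n)),
          inv_mul_cancel₀ (hvpos n).ne']
      obtain ⟨l, hlsph, φ, hφ, hconv⟩ := (isCompact_sphere (0:W) 1).tendsto_subseq hwsph
      have hl0 : l ≠ 0 := by
        intro h
        rw [h] at hlsph
        simp [mem_sphere_zero_iff_norm] at hlsph
      have hlcl : l ∈ closure Cne := by
        have hmem : ∀ n, w n ∈ closure Cne := fun n =>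
          hCsmul _ (inv_pos.mpr (hvpos n)) _ (hvS n).1.1
        exact isClosed_closure.mem_of_tendsto hconv
          (Eventually.of_forall fun n => hmem (φ n))
      have hd := (hdispr p l (hCle hlcl) hl0).1
      push_neg at hd
      obtain ⟨t, ht0, htDom, htKs⟩ := hd Ks hKsc
      have htpos : 0 < t := by
        rcases ht0.lt_or_eq with h | h
        · exact h
        · exfalso
          apply htKs
          rw [← h, zero_smul]
          simpa [hExp0 p] using hpKs
      have hcontAt : ContinuousAt (Exp p) (t • l) :=
        (hExpCont p).continuousAt ((hDom p).mem_nhds htDom)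
      have htend : Tendsto (fun n => t • w (φ n)) atTop (𝓝 (t • l)) := hconv.const_smul t
      have h1 : ∀ᶠ n in atTop, t • w (φ n) ∈ Dom p :=
        htend.eventually ((hDom p).mem_nhds htDom)
      have h2 : ∀ᶠ n in atTop, Exp p (t • w (φ n)) ∉ Ks := by
        have hopen : Ksᶜ ∈ 𝓝 (Exp p (t • l)) :=
          hKscl.isOpen_compl.mem_nhds htKs
        exact htend.eventually (hcontAt.eventually_mem hopen)
      have h3 : ∀ᶠ n in atTop, t ≤ ‖v (φ n)‖ := by
        filter_upwards [eventually_ge_atTop ⌈t⌉₊] with n hn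
        have : t ≤ (n : ℝ) := le_trans (Nat.le_ceil t) (by exact_mod_cast hn)
        calc t ≤ (n:ℝ) := this
          _ ≤ (φ n : ℝ) := by exact_mod_cast hφ.le_apply
          _ ≤ ‖v (φ n)‖ := (hvn (φ n)).le
      obtain ⟨n, hn1, hn2, hn3⟩ := (h1.and (h2.and h3)).exists
      set m := φ n
      have hr : (t / ‖v m‖) • v m = t • w m := by
        rw [div_eq_mul_inv, mul_smul, hw]
      have hmem : Exp p ((t / ‖v m‖) • v m) ∈ Ks := by
        apply seg (v m) (hvS m)
        constructor
        · exact div_nonneg ht0 (hvpos m).le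
        · exact (div_le_one (hvpos m)).mpr hn3
      rw [hr] at hmem
      exact hn2 hmem
    -- closedness
    have hcl : IsClosed S := by
      rw [← isSeqClosed_iff_isClosed]
      intro x v hxS hxv
      have hvcl : v ∈ closure Cne :=
        isClosed_closure.mem_of_tendsto hxv (Eventually.of_forall fun n => (hxS n).1.1)
      have hvDom : v ∈ Dom p := by
        rcases eq_or_ne v 0 with rfl | hv0
        · exact h0Dom p
        · have hnv : (0:ℝ) < ‖v‖ := norm_pos_iff.mpr hv0
          set l : W := ‖v‖⁻¹ • v with hl
          have hl0 : l ≠ 0 := smul_ne_zero (inv_ne_zero hnv.ne') hv0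
          have hlcl : l ∈ closure Cne := hCsmul _ (inv_pos.mpr hnv) _ hvcl
          by_contra hvD
          apply (hdispr p l (hCle hlcl) hl0).1
          refine ⟨Ks, hKsc, ?_⟩
          intro t ht0 htD
          -- first, t < ‖v‖
          have htlt : t < ‖v‖ := by
            by_contra hge
            push_neg at hge
            have htpos : 0 < t := lt_of_lt_of_le hnv hge
            have hveq : (‖v‖ / t) • (t • l) = v := by
              rw [smul_smul, div_mul_cancel₀ _ htpos.ne', hl, smul_smul,
                mul_inv_cancel₀ hnv.ne', one_smul]
            have : v ∈ Dom p := by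
              rw [← hveq]
              exact hstar p _ htD _ ⟨div_nonneg hnv.le ht0, (div_le_one htpos).mpr hge⟩
            exact hvD this
          -- norms of x n converge to ‖v‖
          have hnorm : Tendsto (fun n => ‖x n‖) atTop (𝓝 ‖v‖) :=
            (continuous_norm.tendsto v).comp hxv
          have hxpos : ∀ᶠ n in atTop, t ≤ ‖x n‖ ∧ 0 < ‖x n‖ := by
            have hev1 : ∀ᶠ n in atTop, ‖x n‖ ∈ Ioi ((t + ‖v‖)/2 : ℝ) :=
              hnorm.eventually (Ioi_mem_nhds (by linarith))
            filter_upwards [hev1] with n hn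
            have hn' : (t + ‖v‖)/2 < ‖x n‖ := hn
            constructor <;> linarith
          set y : ℕ → W := fun n => (t / ‖x n‖) • x n with hy
          have hytend : Tendsto y atTop (𝓝 (t • l)) := by
            have hsc : Tendsto (fun n => t / ‖x n‖) atTop (𝓝 (t / ‖v‖)) :=
              tendsto_const_nhds.div hnorm hnv.ne'
            have := hsc.smul hxv
            have heq : (t / ‖v‖) • v = t • l := by
              rw [div_eq_mul_inv, mul_smul, hl]
            rwa [heq] at this
          have hyKs : ∀ᶠ n in atTop, Exp p (y n) ∈ Ks := by
            filter_upwards [hxpos] with n hn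
            apply seg (x n) (hxS n)
            exact ⟨div_nonneg ht0 hn.2.le, (div_le_one hn.2).mpr hn.1⟩
          have hcontAt : ContinuousAt (Exp p) (t • l) :=
            (hExpCont p).continuousAt ((hDom p).mem_nhds htD)
          exact hKscl.mem_of_tendsto (hcontAt.tendsto.comp hytend) hyKs
      refine ⟨⟨hvcl, hvDom⟩, ?_⟩
      have hcontAt : ContinuousAt (Exp p) v :=
        (hExpCont p).continuousAt ((hDom p).mem_nhds hvDom)
      exact hK.isClosed.mem_of_tendsto (hcontAt.tendsto.comp hxv)
        (Eventually.of_forall fun n => (hxS n).2)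
    exact Metric.isCompact_of_isClosed_isBounded hcl hbdd
  refine ⟨main, ?_⟩
  -- causal continuation property
  intro γ hγ hγ0 b hb0 hb1 σ hσcont hσ0 hσspec
  have hK : IsCompact (γ '' Icc (0:ℝ) 1) := isCompact_Icc.image_of_continuousOn hγ.2.1
  have hS := main _ hK
  set t : ℕ → ℝ := fun k => b - b / (k + 1) with ht
  have htmem : ∀ k, t k ∈ Ico (0:ℝ) b := by
    intro k
    have hk1 : (1:ℝ) ≤ (k:ℝ) + 1 := by have := Nat.cast_nonneg (α := ℝ) k; linarith
    constructor
    · have h1 : b / ((k:ℝ)+1) ≤ b := div_le_self hb0.le hk1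
      simp only [ht]
      linarith
    · have h2 : 0 < b / ((k:ℝ)+1) := div_pos hb0 (by positivity)
      simp only [ht]
      linarith
  have hmemS : ∀ k, σ (t k) ∈
      {v : W | v ∈ closure Cne ∩ Dom p ∧ Exp p v ∈ γ '' Icc (0:ℝ) 1} := by
    intro k
    obtain ⟨h1, h2⟩ := hσspec (t k) (htmem k)
    refine ⟨h1, ?_⟩
    rw [h2]
    exact mem_image_of_mem γ ⟨(htmem k).1, le_trans (htmem k).2.le hb1⟩
  obtain ⟨v, hvS, φ, hφ, hconv⟩ := hS.tendsto_subseq hmemS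
  refine ⟨fun k => t (φ k), v, fun k => htmem _, ?_, hvS.1.2, hconv⟩
  have htend : Tendsto t atTop (𝓝 b) := by
    have h : Tendsto (fun k : ℕ => b / ((k:ℝ)+1)) atTop (𝓝 0) := by
      have h0 := (tendsto_const_div_atTop_nhds_zero_nat b).comp (tendsto_add_atTop_nat 1)
      apply h0.congr
      intro k
      show b / ((k:ℕ) + 1 : ℕ) = b / ((k:ℝ)+1)
      push_cast
      ring
    simpa using tendsto_const_nhds.sub h
  exact htend.comp hφ.tendsto_atTop
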